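/- arXiv:2105.09718 — 3 statements merged into one kernel-verified Lean document; each statement's English description precedes it below -/
import Mathlib

section
/- Let B, C ∈ B(H). If w([[0, B], [C, 0]])² = (1/4)·max{ ‖|B|² + |C*|²‖, ‖|B*|² + |C|²‖ }, then ‖B + C*‖ = ‖B − C*‖. -/
open ContinuousLinearMap

variable {H : Type*} [NormedAddCommGroup H] [InnerProductSpace ℂ H] [CompleteSpace H]

/-- The numerical radius of a bounded linear operator:
`w(T) = sup { |⟨Tx, x⟩| : ‖x‖ = 1 }`. -/
noncomputable def numRadius {E : Type*} [NormedAddCommGroup E] [InnerProductSpace ℂ E]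
    (T : E →L[ℂ] E) : ℝ :=
  sSup {r : ℝ | ∃ x : E, ‖x‖ = 1 ∧ r = ‖(inner ℂ (T x) x : ℂ)‖}

/-- The absolute value `|T| = (T*T)^(1/2)` of a bounded linear operator.
Note `opAbs (adjoint T) = (T T*)^(1/2) = |T*|`. -/
noncomputable def opAbs (T : H →L[ℂ] H) : H →L[ℂ] H := CFC.sqrt (adjoint T * T)

/-- The off-diagonal operator matrix `[[0, B], [C, 0]]` acting on `H ⊕ H`
(with the Hilbert space structure `WithLp 2 (H × H)`) by `(x₁, x₂) ↦ (B x₂, C x₁)`. -/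
noncomputable def offDiag (B C : H →L[ℂ] H) :
    WithLp 2 (H × H) →L[ℂ] WithLp 2 (H × H) :=
  ((WithLp.prodContinuousLinearEquiv 2 ℂ H H).symm : (H × H) →L[ℂ] WithLp 2 (H × H)).comp
    (((B.comp (ContinuousLinearMap.snd ℂ H H)).prod
        (C.comp (ContinuousLinearMap.fst ℂ H H))).comp
      ((WithLp.prodContinuousLinearEquiv 2 ℂ H H) : WithLp 2 (H × H) →L[ℂ] H × H))



lemma aux_norm_le {E : Type*} [NormedAddCommGroup E] [InnerProductSpace ℂ E]
    (S : E →L[ℂ] E) (hsym : ∀ x y : E, (inner ℂ (S x) y : ℂ) = inner ℂ x (S y))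
    {M : ℝ} (hM : 0 ≤ M) (hb : ∀ z : E, ‖(inner ℂ (S z) z : ℂ)‖ ≤ M * ‖z‖ ^ 2) :
    ‖S‖ ≤ M := by
  apply opNorm_le_bound S hM
  intro x
  rcases eq_or_ne (S x) 0 with h0 | h0
  · rw [h0, norm_zero]; positivity
  have hx0 : x ≠ 0 := by rintro rfl; exact h0 (map_zero S)
  have hxpos : (0:ℝ) < ‖x‖ := norm_pos_iff.mpr hx0
  have hSpos : (0:ℝ) < ‖S x‖ := norm_pos_iff.mpr h0
  have key : ∀ u v : E, (inner ℂ (S u) v : ℂ).re ≤ M / 2 * (‖u‖ ^ 2 + ‖v‖ ^ 2) := by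
    intro u v
    have e1 : (inner ℂ (S (u+v)) (u+v) : ℂ) - inner ℂ (S (u-v)) (u-v)
        = 2 * ((inner ℂ (S u) v : ℂ) + inner ℂ (S v) u) := by
      simp only [map_add, map_sub, inner_add_left, inner_add_right, inner_sub_left,
        inner_sub_right]
      ring
    have e2' : (inner ℂ (S v) u : ℂ).re = (inner ℂ (S u) v : ℂ).re := by
      rw [hsym v u, ← inner_conj_symm]
      exact Complex.conj_re _
    have e3 : 4 * (inner ℂ (S u) v : ℂ).re
        = ((inner ℂ (S (u+v)) (u+v) : ℂ) - inner ℂ (S (u-v)) (u-v)).re := by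
      rw [e1]
      simp only [Complex.mul_re, Complex.add_re, Complex.add_im, Complex.re_ofNat,
        Complex.im_ofNat]
      linarith [e2']
    have e4 : ((inner ℂ (S (u+v)) (u+v) : ℂ) - inner ℂ (S (u-v)) (u-v)).re
        ≤ M * ‖u+v‖ ^ 2 + M * ‖u-v‖ ^ 2 := by
      rw [Complex.sub_re]
      have b1 : (inner ℂ (S (u+v)) (u+v) : ℂ).re ≤ M * ‖u+v‖ ^ 2 :=
        (Complex.re_le_norm _).trans (hb _)
      have b2 : -(inner ℂ (S (u-v)) (u-v) : ℂ).re ≤ M * ‖u-v‖ ^ 2 := by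
        refine (neg_le_abs _).trans ?_
        exact (Complex.abs_re_le_norm _).trans (hb _)
      linarith
    have e5 : ‖u+v‖ ^ 2 + ‖u-v‖ ^ 2 = 2 * (‖u‖ ^ 2 + ‖v‖ ^ 2) := by
      have := parallelogram_law_with_norm ℂ u v
      nlinarith [this]
    nlinarith [e3, e4, e5]
  set c : ℝ := ‖x‖ / ‖S x‖ with hc
  have hcpos : 0 < c := div_pos hxpos hSpos
  set y : E := (c:ℂ) • S x with hy
  have hyn : ‖y‖ = ‖x‖ := by
    rw [hy, norm_smul, Complex.norm_real, Real.norm_eq_abs, abs_of_pos hcpos, hc,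
      div_mul_cancel₀ _ (ne_of_gt hSpos)]
  have hre : (inner ℂ (S x) y : ℂ).re = c * ‖S x‖ ^ 2 := by
    rw [hy, inner_smul_right, Complex.re_ofReal_mul, inner_self_eq_norm_sq_to_K]
    norm_cast
  have := key x y
  rw [hre, hyn] at this
  have hc2 : c * ‖S x‖ ^ 2 = ‖x‖ * ‖S x‖ := by
    rw [hc]; field_simp
  rw [hc2] at this
  nlinarith [this, hxpos]

lemma nr_bddAbove {E : Type*} [NormedAddCommGroup E] [InnerProductSpace ℂ E] (T : E →L[ℂ] E) :
    BddAbove {r : ℝ | ∃ x : E, ‖x‖ = 1 ∧ r = ‖(inner ℂ (T x) x : ℂ)‖} := by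
  refine ⟨‖T‖, ?_⟩
  rintro r ⟨x, hx, rfl⟩
  calc ‖(inner ℂ (T x) x : ℂ)‖ ≤ ‖T x‖ * ‖x‖ := norm_inner_le_norm _ _
    _ ≤ ‖T‖ * ‖x‖ * ‖x‖ := by
        have := T.le_opNorm x
        nlinarith [norm_nonneg x, norm_nonneg (T x)]
    _ = ‖T‖ := by rw [hx]; ring

lemma nr_ge {E : Type*} [NormedAddCommGroup E] [InnerProductSpace ℂ E] (T : E →L[ℂ] E)
    {x : E} (hx : ‖x‖ = 1) : ‖(inner ℂ (T x) x : ℂ)‖ ≤ numRadius T :=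
  le_csSup (nr_bddAbove T) ⟨x, hx, rfl⟩

lemma nr_nonneg {E : Type*} [NormedAddCommGroup E] [InnerProductSpace ℂ E] [Nontrivial E]
    (T : E →L[ℂ] E) : 0 ≤ numRadius T := by
  obtain ⟨u, hu⟩ := exists_ne (0 : E)
  have hn : ‖(‖u‖⁻¹ • u : E)‖ = 1 := by
    rw [norm_smul, norm_inv, norm_norm, inv_mul_cancel₀ (norm_ne_zero_iff.mpr hu)]
  exact (norm_nonneg _).trans (nr_ge T hn)

lemma nr_bound {E : Type*} [NormedAddCommGroup E] [InnerProductSpace ℂ E] [Nontrivial E]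
    (T : E →L[ℂ] E) (z : E) : ‖(inner ℂ (T z) z : ℂ)‖ ≤ numRadius T * ‖z‖ ^ 2 := by
  rcases eq_or_ne z 0 with rfl | hz
  · simp
  have hzpos : (0:ℝ) < ‖z‖ := norm_pos_iff.mpr hz
  set e : E := (‖z‖⁻¹ : ℝ) • z with he
  have hne : ‖e‖ = 1 := by
    rw [he, norm_smul, norm_inv, norm_norm, inv_mul_cancel₀ (ne_of_gt hzpos)]
  have hec : e = ((‖z‖⁻¹ : ℝ) : ℂ) • z := by rw [he, RCLike.real_smul_eq_coe_smul (K := ℂ)]; rfl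
  have h1 : ‖(inner ℂ (T e) e : ℂ)‖ = ‖z‖⁻¹ * ‖z‖⁻¹ * ‖(inner ℂ (T z) z : ℂ)‖ := by
    rw [hec, map_smul, inner_smul_left, inner_smul_right, norm_mul, norm_mul,
      RCLike.norm_conj, Complex.norm_real, Real.norm_eq_abs,
      abs_of_pos (inv_pos.mpr hzpos)]
    ring
  have h2 := nr_ge T hne
  rw [h1] at h2
  have h3 : ‖z‖⁻¹ * ‖z‖⁻¹ * ‖(inner ℂ (T z) z : ℂ)‖ * ‖z‖^2 ≤ numRadius T * ‖z‖^2 := by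
    nlinarith [sq_nonneg ‖z‖]
  have h4 : ‖z‖⁻¹ * ‖z‖⁻¹ * ‖(inner ℂ (T z) z : ℂ)‖ * ‖z‖^2 = ‖(inner ℂ (T z) z : ℂ)‖ := by
    rw [sq]
    field_simp
  linarith [h3, h4]
theorem adjoint_offDiag (B C : H →L[ℂ] H) :
    adjoint (offDiag B C) = offDiag (adjoint C) (adjoint B) := by
  symm
  rw [eq_adjoint_iff]
  intro x y
  rw [WithLp.prod_inner_apply, WithLp.prod_inner_apply]
  show (inner ℂ (adjoint C ((WithLp.equiv 2 (H×H)) x).2) _ : ℂ)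
      + inner ℂ (adjoint B ((WithLp.equiv 2 (H×H)) x).1) _ = _
  rw [adjoint_inner_left, adjoint_inner_left]
  exact add_comm _ _

lemma offDiag_apply (B C : H →L[ℂ] H) (z : WithLp 2 (H × H)) :
    offDiag B C z = (WithLp.equiv 2 (H × H)).symm
      (B ((WithLp.equiv 2 (H×H)) z).2, C ((WithLp.equiv 2 (H×H)) z).1) := rfl

lemma real_aux {p q ww : ℝ} (hp : 0 ≤ p) (hq : 0 ≤ q) (hw : 0 ≤ ww)
    (h1 : p ≤ 2 * ww) (h2 : q ≤ 2 * ww) (h3 : 8 * ww ^ 2 ≤ p ^ 2 + q ^ 2) : p = q := by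
  have hp2 : p ^ 2 = 4 * ww ^ 2 := by nlinarith
  have hq2 : q ^ 2 = 4 * ww ^ 2 := by nlinarith
  have hpq : p ^ 2 = q ^ 2 := by linarith
  calc p = Real.sqrt (p ^ 2) := (Real.sqrt_sq hp).symm
    _ = Real.sqrt (q ^ 2) := by rw [hpq]
    _ = q := Real.sqrt_sq hq

set_option maxHeartbeats 1000000 in
theorem stmt_6 (B C : H →L[ℂ] H)
    (h : numRadius (offDiag B C) ^ 2 =
      (1 / 4) * max ‖opAbs B ^ 2 + opAbs (adjoint C) ^ 2‖ ‖opAbs (adjoint B) ^ 2 + opAbs C ^ 2‖) :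
    ‖B + adjoint C‖ = ‖B - adjoint C‖ := by
  rcases subsingleton_or_nontrivial H with hH | hH
  · have : B + adjoint C = B - adjoint C := by ext x; exact Subsingleton.elim _ _
    rw [this]
  haveI : Nontrivial (WithLp 2 (H × H)) := (WithLp.equiv 2 (H × H)).nontrivial
  set T := offDiag B C with hT
  set w := numRadius T with hwdef
  set P := B + adjoint C with hPdef
  set Q := B - adjoint C with hQdef
  have hw : 0 ≤ w := nr_nonneg T
  have hTz : ∀ z, ‖(inner ℂ (T z) z : ℂ)‖ ≤ w * ‖z‖ ^ 2 := nr_bound T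
  have hadjT : adjoint T = offDiag (adjoint C) (adjoint B) := adjoint_offDiag B C
  have hconj : ∀ z : WithLp 2 (H × H),
      (inner ℂ (adjoint T z) z : ℂ) = starRingEnd ℂ (inner ℂ (T z) z) := by
    intro z
    rw [adjoint_inner_left, ← inner_conj_symm]
  -- additivity / smul of the equiv, definitional
  have hadd : ∀ a b : H × H, (WithLp.equiv 2 (H×H)).symm a + (WithLp.equiv 2 (H×H)).symm b
      = (WithLp.equiv 2 (H×H)).symm (a + b) := fun _ _ => rfl
  have hsmul : ∀ (c : ℂ) (a : H × H), c • (WithLp.equiv 2 (H×H)).symm a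
      = (WithLp.equiv 2 (H×H)).symm (c • a) := fun _ _ => rfl
  -- the real part operator S₁
  set S₁ : WithLp 2 (H × H) →L[ℂ] WithLp 2 (H × H) := T + adjoint T with hS₁def
  have hS₁adj : adjoint S₁ = S₁ := by
    rw [hS₁def, map_add, adjoint_adjoint, add_comm]
  have hsym₁ : ∀ x y : WithLp 2 (H × H), (inner ℂ (S₁ x) y : ℂ) = inner ℂ x (S₁ y) := by
    intro x y
    conv_lhs => rw [← hS₁adj]
    exact adjoint_inner_left _ _ _
  have hb₁ : ∀ z, ‖(inner ℂ (S₁ z) z : ℂ)‖ ≤ (2 * w) * ‖z‖ ^ 2 := by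
    intro z
    rw [hS₁def, add_apply, inner_add_left, hconj z]
    calc ‖(inner ℂ (T z) z : ℂ) + starRingEnd ℂ (inner ℂ (T z) z)‖
        ≤ ‖(inner ℂ (T z) z : ℂ)‖ + ‖starRingEnd ℂ (inner ℂ (T z) z : ℂ)‖ := norm_add_le _ _
      _ = 2 * ‖(inner ℂ (T z) z : ℂ)‖ := by rw [RCLike.norm_conj]; ring
      _ ≤ 2 * (w * ‖z‖ ^ 2) := by linarith [hTz z]
      _ = (2 * w) * ‖z‖ ^ 2 := by ring
  have hS₁ : ‖S₁‖ ≤ 2 * w := aux_norm_le S₁ hsym₁ (by positivity) hb₁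
  have hPy : ∀ y : H, S₁ ((WithLp.equiv 2 (H×H)).symm (0, y))
      = (WithLp.equiv 2 (H×H)).symm (P y, 0) := by
    intro y
    rw [hS₁def, add_apply, hadjT, offDiag_apply, offDiag_apply, hadd]
    simp [hPdef, add_apply]
  have hP : ‖P‖ ≤ 2 * w := by
    apply opNorm_le_bound _ (by positivity)
    intro y
    have h1 := S₁.le_opNorm ((WithLp.equiv 2 (H×H)).symm (0, y))
    rw [hPy y, WithLp.equiv_symm_apply, WithLp.norm_toLp_fst, WithLp.norm_toLp_snd] at h1
    calc ‖P y‖ ≤ ‖S₁‖ * ‖y‖ := h1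
      _ ≤ (2 * w) * ‖y‖ := by nlinarith [norm_nonneg y]
  -- the imaginary part operator S₂
  set S₂ : WithLp 2 (H × H) →L[ℂ] WithLp 2 (H × H) := (-Complex.I) • (T - adjoint T) with hS₂def
  have hS₂adj : adjoint S₂ = S₂ := by
    rw [hS₂def, ← star_eq_adjoint, star_smul, star_sub, star_eq_adjoint, star_eq_adjoint,
      adjoint_adjoint]
    simp only [smul_sub, star_neg, Complex.star_def, Complex.conj_I, neg_smul, neg_sub]
    abel
  have hsym₂ : ∀ x y : WithLp 2 (H × H), (inner ℂ (S₂ x) y : ℂ) = inner ℂ x (S₂ y) := by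
    intro x y
    conv_lhs => rw [← hS₂adj]
    exact adjoint_inner_left _ _ _
  have hb₂ : ∀ z, ‖(inner ℂ (S₂ z) z : ℂ)‖ ≤ (2 * w) * ‖z‖ ^ 2 := by
    intro z
    rw [hS₂def, smul_apply, inner_smul_left, sub_apply, inner_sub_left, hconj z, norm_mul]
    have : ‖starRingEnd ℂ (-Complex.I)‖ = 1 := by simp
    rw [this, one_mul]
    calc ‖(inner ℂ (T z) z : ℂ) - starRingEnd ℂ (inner ℂ (T z) z)‖
        ≤ ‖(inner ℂ (T z) z : ℂ)‖ + ‖starRingEnd ℂ (inner ℂ (T z) z : ℂ)‖ := norm_sub_le _ _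
      _ = 2 * ‖(inner ℂ (T z) z : ℂ)‖ := by rw [RCLike.norm_conj]; ring
      _ ≤ 2 * (w * ‖z‖ ^ 2) := by linarith [hTz z]
      _ = (2 * w) * ‖z‖ ^ 2 := by ring
  have hS₂ : ‖S₂‖ ≤ 2 * w := aux_norm_le S₂ hsym₂ (by positivity) hb₂
  have hQy : ∀ y : H, S₂ ((WithLp.equiv 2 (H×H)).symm (0, y))
      = (WithLp.equiv 2 (H×H)).symm ((-Complex.I) • (Q y), 0) := by
    intro y
    rw [hS₂def, smul_apply, sub_apply, hadjT, offDiag_apply, offDiag_apply]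
    rw [show ∀ a b : H × H, (WithLp.equiv 2 (H×H)).symm a - (WithLp.equiv 2 (H×H)).symm b
      = (WithLp.equiv 2 (H×H)).symm (a - b) from fun _ _ => rfl, hsmul]
    simp [hQdef, sub_apply, Prod.smul_mk]
  have hQ : ‖Q‖ ≤ 2 * w := by
    apply opNorm_le_bound _ (by positivity)
    intro y
    have h1 := S₂.le_opNorm ((WithLp.equiv 2 (H×H)).symm (0, y))
    rw [hQy y, WithLp.equiv_symm_apply, WithLp.norm_toLp_fst, WithLp.norm_toLp_snd, norm_smul] at h1
    simp only [norm_neg, Complex.norm_I, one_mul] at h1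
    calc ‖Q y‖ ≤ ‖S₂‖ * ‖y‖ := h1
      _ ≤ (2 * w) * ‖y‖ := by nlinarith [norm_nonneg y]
  -- rewriting the hypothesis
  have hsqB : opAbs B ^ 2 = adjoint B * B :=
    CFC.sq_sqrt (adjoint B * B) (star_eq_adjoint B ▸ star_mul_self_nonneg B)
  have hsqB' : opAbs (adjoint B) ^ 2 = B * adjoint B := by
    have h0 : opAbs (adjoint B) = CFC.sqrt (B * adjoint B) := by
      unfold opAbs; rw [adjoint_adjoint]
    rw [h0]
    exact CFC.sq_sqrt _ (star_eq_adjoint B ▸ mul_star_self_nonneg B)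
  have hsqC : opAbs C ^ 2 = adjoint C * C :=
    CFC.sq_sqrt (adjoint C * C) (star_eq_adjoint C ▸ star_mul_self_nonneg C)
  have hsqC' : opAbs (adjoint C) ^ 2 = C * adjoint C := by
    have h0 : opAbs (adjoint C) = CFC.sqrt (C * adjoint C) := by
      unfold opAbs; rw [adjoint_adjoint]
    rw [h0]
    exact CFC.sq_sqrt _ (star_eq_adjoint C ▸ mul_star_self_nonneg C)
  rw [hsqB, hsqB', hsqC, hsqC'] at h
  -- the two algebraic identities
  have hid1 : adjoint P * P + adjoint Q * Q
      = (adjoint B * B + C * adjoint C) + (adjoint B * B + C * adjoint C) := by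
    rw [hPdef, hQdef, ← star_eq_adjoint, ← star_eq_adjoint, ← star_eq_adjoint,
      ← star_eq_adjoint]
    simp only [star_add, star_sub, star_star, add_mul, mul_add, sub_mul, mul_sub]
    abel
  have hid2 : P * adjoint P + Q * adjoint Q
      = (B * adjoint B + adjoint C * C) + (B * adjoint B + adjoint C * C) := by
    rw [hPdef, hQdef, ← star_eq_adjoint, ← star_eq_adjoint, ← star_eq_adjoint,
      ← star_eq_adjoint]
    simp only [star_add, star_sub, star_star, add_mul, mul_add, sub_mul, mul_sub]
    abel
  have hdouble : ∀ X : H →L[ℂ] H, ‖X + X‖ = 2 * ‖X‖ := by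
    intro X
    rw [← two_smul ℝ X, norm_smul]
    simp
  have hPP : ‖adjoint P * P‖ = ‖P‖ ^ 2 := by
    rw [← star_eq_adjoint, CStarRing.norm_star_mul_self, sq]
  have hQQ : ‖adjoint Q * Q‖ = ‖Q‖ ^ 2 := by
    rw [← star_eq_adjoint, CStarRing.norm_star_mul_self, sq]
  have hPP' : ‖P * adjoint P‖ = ‖P‖ ^ 2 := by
    rw [← star_eq_adjoint, CStarRing.norm_self_mul_star, sq]
  have hQQ' : ‖Q * adjoint Q‖ = ‖Q‖ ^ 2 := by
    rw [← star_eq_adjoint, CStarRing.norm_self_mul_star, sq]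
  have hn1 : 2 * ‖adjoint B * B + C * adjoint C‖ ≤ ‖P‖ ^ 2 + ‖Q‖ ^ 2 := by
    rw [← hdouble, ← hid1]
    calc ‖adjoint P * P + adjoint Q * Q‖ ≤ ‖adjoint P * P‖ + ‖adjoint Q * Q‖ := norm_add_le _ _
      _ = ‖P‖ ^ 2 + ‖Q‖ ^ 2 := by rw [hPP, hQQ]
  have hn2 : 2 * ‖B * adjoint B + adjoint C * C‖ ≤ ‖P‖ ^ 2 + ‖Q‖ ^ 2 := by
    rw [← hdouble, ← hid2]
    calc ‖P * adjoint P + Q * adjoint Q‖ ≤ ‖P * adjoint P‖ + ‖Q * adjoint Q‖ := norm_add_le _ _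
      _ = ‖P‖ ^ 2 + ‖Q‖ ^ 2 := by rw [hPP', hQQ']
  have hmax : max ‖adjoint B * B + C * adjoint C‖ ‖B * adjoint B + adjoint C * C‖
      ≤ (‖P‖ ^ 2 + ‖Q‖ ^ 2) / 2 := by
    apply max_le <;> linarith
  have hsum : 8 * w ^ 2 ≤ ‖P‖ ^ 2 + ‖Q‖ ^ 2 := by
    linarith [h, hmax]
  exact real_aux (norm_nonneg P) (norm_nonneg Q) hw hP hQ hsum
end

section
/- Let B ∈ B(H). Then w(B)² ≥ (1/8)·[ max{ ‖B + B*‖², ‖B − B*‖² } + ‖B + B*‖·‖B − B*‖ ] ≥ (1/4)·‖|B|² + |B*|²‖. -/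
open ContinuousLinearMap

variable {H : Type*} [NormedAddCommGroup H] [InnerProductSpace ℂ H] [CompleteSpace H]

section Aux

set_option linter.unusedSectionVars false

lemma selfadj_norm_le {T : H →L[ℂ] H} (hT : adjoint T = T) {M : ℝ} (hM : 0 ≤ M)
    (h : ∀ x : H, ‖(inner ℂ (T x) x : ℂ)‖ ≤ M * ‖x‖ ^ 2) : ‖T‖ ≤ M := by
  refine opNorm_le_bound T hM (fun x => ?_)
  rcases eq_or_ne (T x) 0 with hTx | hTx
  · simp [hTx, mul_nonneg hM (norm_nonneg x)]
  have hTxn : (0:ℝ) < ‖T x‖ := norm_pos_iff.mpr hTx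
  have hxn : (0:ℝ) < ‖x‖ := by
    rcases eq_or_ne x 0 with rfl | hx
    · simp at hTx
    · exact norm_pos_iff.mpr hx
  have hsym : ∀ u v : H, (inner ℂ (T u) v : ℂ) = inner ℂ u (T v) := by
    intro u v
    conv_lhs => rw [← hT]
    exact adjoint_inner_left T v u
  set c : ℝ := ‖x‖ / ‖T x‖ with hc
  set y : H := ((c : ℂ)) • T x with hy
  have hyn : ‖y‖ = ‖x‖ := by
    rw [hy, norm_smul]
    simp [hc, abs_of_nonneg (le_of_lt (div_pos hxn hTxn)),
      div_mul_cancel₀ _ (ne_of_gt hTxn)]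
  have hare : (inner ℂ (T x) y : ℂ).re = ‖x‖ * ‖T x‖ := by
    rw [hy, inner_smul_right]
    have h9 : (inner ℂ (T x) (T x) : ℂ) = ((‖T x‖^2 : ℝ) : ℂ) := by
      rw [inner_self_eq_norm_sq_to_K]; norm_cast
    rw [h9, ← Complex.ofReal_mul, Complex.ofReal_re, hc]
    field_simp
  have expand : (inner ℂ (T (x+y)) (x+y) : ℂ) - inner ℂ (T (x-y)) (x-y)
      = 2 * (inner ℂ (T x) y + inner ℂ (T y) x) := by
    simp only [map_add, map_sub, inner_add_left, inner_add_right, inner_sub_left,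
      inner_sub_right]
    ring
  have hconj : (inner ℂ (T y) x : ℂ) = starRingEnd ℂ (inner ℂ (T x) y) := by
    rw [hsym y x, ← inner_conj_symm]
  rw [hconj] at expand
  have key := congrArg Complex.re expand
  simp only [Complex.sub_re, Complex.mul_re, Complex.add_re, Complex.add_im,
    Complex.conj_re, Complex.conj_im, Complex.re_ofNat, Complex.im_ofNat] at key
  have h1 : (inner ℂ (T (x+y)) (x+y) : ℂ).re ≤ M * ‖x+y‖ ^ 2 :=
    le_trans (Complex.re_le_norm _) (h _)
  have h2 : -(inner ℂ (T (x-y)) (x-y) : ℂ).re ≤ M * ‖x-y‖ ^ 2 :=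
    le_trans (neg_le_abs _) (le_trans (Complex.abs_re_le_norm _) (h _))
  have hpar := parallelogram_law_with_norm ℂ x y
  rw [hyn] at hpar
  have hpar' : ‖x+y‖^2 + ‖x-y‖^2 = 4*‖x‖^2 := by
    rw [pow_two, pow_two, pow_two]; linarith
  have hsum : M * ‖x+y‖^2 + M * ‖x-y‖^2 = 4 * (M * ‖x‖^2) := by
    rw [← mul_add, hpar']; ring
  have hfin : ‖x‖ * ‖T x‖ ≤ M * ‖x‖^2 := by linarith [key, h1, h2, hare]
  have hlast : ‖x‖ * ‖T x‖ ≤ ‖x‖ * (M * ‖x‖) := by nlinarith [hfin]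
  exact (mul_le_mul_iff_right₀ hxn).mp hlast

lemma numRadius_bddAbove (B : H →L[ℂ] H) :
    BddAbove {r : ℝ | ∃ x : H, ‖x‖ = 1 ∧ r = ‖(inner ℂ (B x) x : ℂ)‖} := by
  refine ⟨‖B‖, fun r hr => ?_⟩
  obtain ⟨x, hx, rfl⟩ := hr
  calc ‖(inner ℂ (B x) x : ℂ)‖ ≤ ‖B x‖ * ‖x‖ := norm_inner_le_norm _ _
    _ ≤ ‖B‖ * ‖x‖ * ‖x‖ := by
        have := B.le_opNorm x
        nlinarith [norm_nonneg x, norm_nonneg (B x)]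
    _ = ‖B‖ := by rw [hx]; ring

lemma numRadius_nonneg (B : H →L[ℂ] H) : 0 ≤ numRadius B :=
  Real.sSup_nonneg (fun r hr => by obtain ⟨x, _, rfl⟩ := hr; positivity)

lemma inner_le_numRadius (B : H →L[ℂ] H) {x : H} (hx : ‖x‖ = 1) :
    ‖(inner ℂ (B x) x : ℂ)‖ ≤ numRadius B :=
  le_csSup (numRadius_bddAbove B) ⟨x, hx, rfl⟩

lemma numRadius_quad (B : H →L[ℂ] H) (x : H) :
    ‖(inner ℂ (B x) x : ℂ)‖ ≤ numRadius B * ‖x‖ ^ 2 := by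
  rcases eq_or_ne x 0 with rfl | hx
  · simp
  have hxn : (0:ℝ) < ‖x‖ := norm_pos_iff.mpr hx
  set u : H := ((‖x‖⁻¹ : ℝ) : ℂ) • x with hu
  have hun : ‖u‖ = 1 := by
    rw [hu, norm_smul]
    simp [abs_of_nonneg (inv_nonneg.mpr hxn.le), inv_mul_cancel₀ hxn.ne']
  have h1 : (inner ℂ (B u) u : ℂ) = ((‖x‖⁻¹ : ℝ) : ℂ) * starRingEnd ℂ ((‖x‖⁻¹ : ℝ) : ℂ)
      * inner ℂ (B x) x := by
    rw [hu, map_smul, inner_smul_left, inner_smul_right]; ring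
  have h2 : ‖(inner ℂ (B u) u : ℂ)‖ = ‖x‖⁻¹ * ‖x‖⁻¹ * ‖(inner ℂ (B x) x : ℂ)‖ := by
    rw [h1, norm_mul, norm_mul, RingHomIsometric.norm_map]
    simp [abs_of_nonneg (inv_nonneg.mpr hxn.le)]
  have h3 := inner_le_numRadius B hun
  rw [h2] at h3
  have := mul_le_mul_of_nonneg_left h3 (le_of_lt (mul_pos hxn hxn))
  calc ‖(inner ℂ (B x) x : ℂ)‖ = (‖x‖*‖x‖) * (‖x‖⁻¹ * ‖x‖⁻¹ * ‖(inner ℂ (B x) x : ℂ)‖) := by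
        field_simp
    _ ≤ (‖x‖*‖x‖) * numRadius B := this
    _ = numRadius B * ‖x‖^2 := by ring

lemma norm_add_adjoint_le (B : H →L[ℂ] H) : ‖B + adjoint B‖ ≤ 2 * numRadius B := by
  have hadj : adjoint (B + adjoint B) = B + adjoint B := by
    rw [map_add, adjoint_adjoint, add_comm]
  refine selfadj_norm_le hadj (by linarith [numRadius_nonneg B]) (fun x => ?_)
  have h1 : (inner ℂ ((B + adjoint B) x) x : ℂ)
      = inner ℂ (B x) x + starRingEnd ℂ (inner ℂ (B x) x) := by
    rw [add_apply, inner_add_left, adjoint_inner_left, inner_conj_symm]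
  calc ‖(inner ℂ ((B + adjoint B) x) x : ℂ)‖
      ≤ ‖(inner ℂ (B x) x : ℂ)‖ + ‖starRingEnd ℂ (inner ℂ (B x) x)‖ := by
        rw [h1]; exact norm_add_le _ _
    _ = 2 * ‖(inner ℂ (B x) x : ℂ)‖ := by rw [RingHomIsometric.norm_map]; ring
    _ ≤ 2 * (numRadius B * ‖x‖^2) := by
        have := numRadius_quad B x; linarith
    _ = 2 * numRadius B * ‖x‖^2 := by ring

lemma norm_sub_adjoint_le (B : H →L[ℂ] H) : ‖B - adjoint B‖ ≤ 2 * numRadius B := by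
  set S : H →L[ℂ] H := B - adjoint B with hS
  set T : H →L[ℂ] H := Complex.I • S with hT
  have hTS : ‖T‖ = ‖S‖ := by rw [hT, norm_smul, Complex.norm_I, one_mul]
  have hSadj : adjoint S = -S := by
    rw [hS, map_sub, adjoint_adjoint, neg_sub]
  have hadj : adjoint T = T := by
    rw [← star_eq_adjoint, hT, star_smul, star_eq_adjoint, hSadj]
    simp [Complex.star_def, Complex.conj_I]
  rw [← hTS]
  refine selfadj_norm_le hadj (by linarith [numRadius_nonneg B]) (fun x => ?_)
  have hTx : ‖(inner ℂ (T x) x : ℂ)‖ = ‖(inner ℂ (S x) x : ℂ)‖ := by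
    rw [hT, smul_apply, inner_smul_left]
    rw [norm_mul, RingHomIsometric.norm_map, Complex.norm_I, one_mul]
  rw [hTx]
  have h1 : (inner ℂ (S x) x : ℂ)
      = inner ℂ (B x) x - starRingEnd ℂ (inner ℂ (B x) x) := by
    rw [hS, sub_apply, inner_sub_left, adjoint_inner_left, inner_conj_symm]
  calc ‖(inner ℂ (S x) x : ℂ)‖
      ≤ ‖(inner ℂ (B x) x : ℂ)‖ + ‖starRingEnd ℂ (inner ℂ (B x) x)‖ := by
        rw [h1]; exact norm_sub_le _ _
    _ = 2 * ‖(inner ℂ (B x) x : ℂ)‖ := by rw [RingHomIsometric.norm_map]; ring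
    _ ≤ 2 * (numRadius B * ‖x‖^2) := by
        have := numRadius_quad B x; linarith
    _ = 2 * numRadius B * ‖x‖^2 := by ring

end Aux

set_option synthInstance.maxHeartbeats 1000000 in
set_option maxHeartbeats 1000000 in
theorem stmt_9 (B : H →L[ℂ] H) :
    (1 / 8) * (max (‖B + adjoint B‖ ^ 2) (‖B - adjoint B‖ ^ 2) +
        ‖B + adjoint B‖ * ‖B - adjoint B‖) ≤ numRadius B ^ 2 ∧
    (1 / 4) * ‖opAbs B ^ 2 + opAbs (adjoint B) ^ 2‖ ≤
      (1 / 8) * (max (‖B + adjoint B‖ ^ 2) (‖B - adjoint B‖ ^ 2) +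
        ‖B + adjoint B‖ * ‖B - adjoint B‖) := by
  set a : ℝ := ‖B + adjoint B‖ with ha'
  set b : ℝ := ‖B - adjoint B‖ with hb'
  have ha0 : 0 ≤ a := norm_nonneg _
  have hb0 : 0 ≤ b := norm_nonneg _
  have hw0 : 0 ≤ numRadius B := numRadius_nonneg B
  have ha : a ≤ 2 * numRadius B := norm_add_adjoint_le B
  have hb : b ≤ 2 * numRadius B := norm_sub_adjoint_le B
  constructor
  · have hmax : max (a^2) (b^2) ≤ 4 * numRadius B ^ 2 := by
      refine max_le (by nlinarith) (by nlinarith)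
    have hab : a * b ≤ 4 * numRadius B ^ 2 := by nlinarith
    linarith
  · -- second inequality
    have e1 : opAbs B ^ 2 = adjoint B * B := by
      rw [opAbs]
      refine CFC.sq_sqrt _ ?_
      simpa [star_eq_adjoint] using star_mul_self_nonneg B
    have e2 : opAbs (adjoint B) ^ 2 = B * adjoint B := by
      rw [opAbs, adjoint_adjoint]
      refine CFC.sq_sqrt _ ?_
      simpa [star_eq_adjoint, adjoint_adjoint] using star_mul_self_nonneg (adjoint B)
    set X : H →L[ℂ] H := adjoint B * B + B * adjoint B with hX
    have hid : X + X = (B + adjoint B)^2 - (B - adjoint B)^2 := by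
      rw [hX]; noncomm_ring
    have hnorm : 2 * ‖X‖ ≤ a^2 + b^2 := by
      have h1 : ‖X + X‖ = 2 * ‖X‖ := by
        rw [← two_smul ℝ X, norm_smul]
        norm_num
      have h2 : ‖(B + adjoint B)^2 - (B - adjoint B)^2‖ ≤ a^2 + b^2 := by
        refine le_trans (norm_sub_le _ _) ?_
        have g1 : ‖(B + adjoint B)^2‖ ≤ a^2 := by
          rw [pow_two, pow_two]; exact norm_mul_le _ _
        have g2 : ‖(B - adjoint B)^2‖ ≤ b^2 := by
          rw [pow_two, pow_two]; exact norm_mul_le _ _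
        linarith
      rw [← h1, hid]; exact h2
    have hgoal : ‖opAbs B ^ 2 + opAbs (adjoint B) ^ 2‖ = ‖X‖ := by
      rw [e1, e2, hX]
    rw [hgoal]
    rcases le_total a b with hab | hab
    · have hmax : max (a^2) (b^2) = b^2 := max_eq_right (by nlinarith)
      rw [hmax]
      nlinarith
    · have hmax : max (a^2) (b^2) = a^2 := max_eq_left (by nlinarith)
      rw [hmax]
      nlinarith
end

section
/- Let B ∈ B(H) and let 0 ≤ α ≤ 1. Then w(B)⁴ ≤ ((1+α)/8)·‖|B|⁴ + |B*|⁴‖ + ((1−α)/4)·w(B²)² + (1/4)·‖|B|² + |B*|²‖·w(B²). -/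
open ContinuousLinearMap
open scoped InnerProductSpace

variable {H : Type*} [NormedAddCommGroup H] [InnerProductSpace ℂ H] [CompleteSpace H]

section Buzano
variable {E : Type*} [NormedAddCommGroup E] [InnerProductSpace ℂ E]

lemma my_buzano (a b e : E) (he : ‖e‖ = 1) :
    ‖(⟪a, e⟫_ℂ) * ⟪e, b⟫_ℂ‖ ≤ (‖a‖ * ‖b‖ + ‖⟪a, b⟫_ℂ‖) / 2 := by
  set c : ℂ := ⟪e, a⟫_ℂ with hc
  set a' : E := (2 * c) • e - a with ha'
  have hkey : ⟪a', b⟫_ℂ + ⟪a, b⟫_ℂ = 2 * (⟪a, e⟫_ℂ * ⟪e, b⟫_ℂ) := by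
    rw [ha', inner_sub_left, inner_smul_left, ← inner_conj_symm a e, ← hc,
      map_mul (starRingEnd ℂ), Complex.conj_ofNat]
    ring
  have hna : ‖a'‖ = ‖a‖ := by
    have h2 : RCLike.re ⟪(2 * c) • e, a⟫_ℂ = 2 * ‖c‖ ^ 2 := by
      rw [inner_smul_left, ← hc, map_mul (starRingEnd ℂ), Complex.conj_ofNat, mul_assoc,
        RCLike.conj_mul]
      simp [RCLike.ofReal_mul]
      norm_cast
    have h1 : ‖a'‖ ^ 2 = ‖a‖ ^ 2 := by
      rw [ha', @norm_sub_sq ℂ, h2, norm_smul, he]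
      simp
      ring
    calc ‖a'‖ = √(‖a'‖ ^ 2) := (Real.sqrt_sq (norm_nonneg _)).symm
      _ = √(‖a‖ ^ 2) := by rw [h1]
      _ = ‖a‖ := Real.sqrt_sq (norm_nonneg _)
  have h3 : 2 * ‖(⟪a, e⟫_ℂ) * ⟪e, b⟫_ℂ‖ = ‖⟪a', b⟫_ℂ + ⟪a, b⟫_ℂ‖ := by
    rw [hkey, norm_mul]; simp
  have h4 : ‖⟪a', b⟫_ℂ + ⟪a, b⟫_ℂ‖ ≤ ‖a‖ * ‖b‖ + ‖⟪a, b⟫_ℂ‖ := by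
    calc ‖⟪a', b⟫_ℂ + ⟪a, b⟫_ℂ‖ ≤ ‖⟪a', b⟫_ℂ‖ + ‖⟪a, b⟫_ℂ‖ := norm_add_le _ _
      _ ≤ ‖a'‖ * ‖b‖ + ‖⟪a, b⟫_ℂ‖ := by gcongr; exact norm_inner_le_norm _ _
      _ = ‖a‖ * ‖b‖ + ‖⟪a, b⟫_ℂ‖ := by rw [hna]
  linarith

lemma numRadius_bdd (T : E →L[ℂ] E) :
    BddAbove {r : ℝ | ∃ x : E, ‖x‖ = 1 ∧ r = ‖(inner ℂ (T x) x : ℂ)‖} := by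
  refine ⟨‖T‖, ?_⟩
  rintro r ⟨x, hx, rfl⟩
  calc ‖(⟪T x, x⟫_ℂ)‖ ≤ ‖T x‖ * ‖x‖ := norm_inner_le_norm _ _
    _ ≤ ‖T‖ * ‖x‖ * ‖x‖ := by gcongr; exact T.le_opNorm x
    _ = ‖T‖ := by rw [hx]; ring

lemma le_numRadius (T : E →L[ℂ] E) {x : E} (hx : ‖x‖ = 1) :
    ‖(⟪T x, x⟫_ℂ)‖ ≤ numRadius T :=
  le_csSup (numRadius_bdd T) ⟨x, hx, rfl⟩

lemma numRadius_nonneg_s13 (T : E →L[ℂ] E) : 0 ≤ numRadius T :=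
  Real.sSup_nonneg (by rintro r ⟨x, hx, rfl⟩; exact norm_nonneg _)

lemma numRadius_le (T : E →L[ℂ] E) {c : ℝ} (hc : 0 ≤ c)
    (h : ∀ x : E, ‖x‖ = 1 → ‖(⟪T x, x⟫_ℂ)‖ ≤ c) : numRadius T ≤ c :=
  Real.sSup_le (by rintro r ⟨x, hx, rfl⟩; exact h x hx) hc

end Buzano

lemma opAbs_sq (T : H →L[ℂ] H) : opAbs T ^ 2 = adjoint T * T := by
  rw [opAbs]
  exact CFC.sq_sqrt _ (by rw [← star_eq_adjoint]; exact star_mul_self_nonneg T)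

lemma opAbs_adj_sq (T : H →L[ℂ] H) : opAbs (adjoint T) ^ 2 = T * adjoint T := by
  rw [opAbs_sq, adjoint_adjoint]

-- pointwise: ‖Bx‖² + ‖B*x‖² ≤ ‖|B|² + |B*|²‖ for unit x
lemma normsq_add_le (B : H →L[ℂ] H) {x : H} (hx : ‖x‖ = 1) :
    ‖B x‖ ^ 2 + ‖adjoint B x‖ ^ 2 ≤ ‖opAbs B ^ 2 + opAbs (adjoint B) ^ 2‖ := by
  have h1 : (⟪(opAbs B ^ 2 + opAbs (adjoint B) ^ 2) x, x⟫_ℂ)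
      = ((‖B x‖ ^ 2 + ‖adjoint B x‖ ^ 2 : ℝ) : ℂ) := by
    rw [opAbs_sq, opAbs_adj_sq, add_apply, inner_add_left, mul_apply_eq_comp, mul_apply_eq_comp]
    have t1 : (⟪adjoint B (B x), x⟫_ℂ) = ⟪B x, B x⟫_ℂ := adjoint_inner_left B x (B x)
    have t2 := adjoint_inner_left (adjoint B) x (adjoint B x)
    rw [adjoint_adjoint] at t2
    rw [t1, t2, inner_self_eq_norm_sq_to_K, inner_self_eq_norm_sq_to_K]
    push_cast
    norm_cast
  have h2 : ‖(⟪(opAbs B ^ 2 + opAbs (adjoint B) ^ 2) x, x⟫_ℂ)‖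
      ≤ ‖opAbs B ^ 2 + opAbs (adjoint B) ^ 2‖ := by
    calc ‖(⟪(opAbs B ^ 2 + opAbs (adjoint B) ^ 2) x, x⟫_ℂ)‖
        ≤ ‖(opAbs B ^ 2 + opAbs (adjoint B) ^ 2) x‖ * ‖x‖ := norm_inner_le_norm _ _
      _ ≤ ‖opAbs B ^ 2 + opAbs (adjoint B) ^ 2‖ * ‖x‖ * ‖x‖ := by
          gcongr; exact le_opNorm _ _
      _ = _ := by rw [hx]; ring
  rw [h1] at h2
  have h3 : 0 ≤ ‖B x‖ ^ 2 + ‖adjoint B x‖ ^ 2 := by positivity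
  rwa [Complex.norm_real, Real.norm_eq_abs, abs_of_nonneg h3] at h2

-- T² ≤ 2S
lemma Tsq_le (B : H →L[ℂ] H) :
    ‖opAbs B ^ 2 + opAbs (adjoint B) ^ 2‖ ^ 2
      ≤ 2 * ‖opAbs B ^ 4 + opAbs (adjoint B) ^ 4‖ := by
  set X := adjoint B * B with hX
  set Y := B * adjoint B with hY
  have hXsa : IsSelfAdjoint X := by
    rw [hX, ← star_eq_adjoint]; exact IsSelfAdjoint.star_mul_self B
  have hYsa : IsSelfAdjoint Y := by
    rw [hY, ← star_eq_adjoint]; exact IsSelfAdjoint.mul_star_self B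
  have hsum : IsSelfAdjoint (X + Y) := hXsa.add hYsa
  have e2 : opAbs B ^ 2 + opAbs (adjoint B) ^ 2 = X + Y := by
    rw [opAbs_sq, opAbs_adj_sq]
  have e4 : opAbs B ^ 4 + opAbs (adjoint B) ^ 4 = X ^ 2 + Y ^ 2 := by
    have : ∀ C : H →L[ℂ] H, C ^ 4 = (C ^ 2) ^ 2 := fun C => by rw [← pow_mul]
    rw [this, this, opAbs_sq, opAbs_adj_sq]
  have hnormsq : ‖X + Y‖ ^ 2 = ‖(X + Y) ^ 2‖ := by
    have := CStarRing.norm_star_mul_self (x := X + Y)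
    rw [hsum.star_eq] at this
    rw [← sq] at this
    rw [this]; ring
  have horder : (X + Y) ^ 2 ≤ (X ^ 2 + Y ^ 2) + (X ^ 2 + Y ^ 2) := by
    rw [← sub_nonneg]
    have h : (X ^ 2 + Y ^ 2) + (X ^ 2 + Y ^ 2) - (X + Y) ^ 2 = star (X - Y) * (X - Y) := by
      rw [star_sub, hXsa.star_eq, hYsa.star_eq]
      noncomm_ring
    rw [h]
    exact star_mul_self_nonneg _
  have hsqnn : (0 : H →L[ℂ] H) ≤ (X + Y) ^ 2 := by
    have := star_mul_self_nonneg (X + Y)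
    rwa [hsum.star_eq, ← sq] at this
  have hnle : ‖(X + Y) ^ 2‖ ≤ ‖(X ^ 2 + Y ^ 2) + (X ^ 2 + Y ^ 2)‖ :=
    CStarAlgebra.norm_le_norm_of_nonneg_of_le hsqnn horder
  calc ‖opAbs B ^ 2 + opAbs (adjoint B) ^ 2‖ ^ 2 = ‖(X + Y) ^ 2‖ := by rw [e2, hnormsq]
    _ ≤ ‖(X ^ 2 + Y ^ 2) + (X ^ 2 + Y ^ 2)‖ := hnle
    _ ≤ ‖X ^ 2 + Y ^ 2‖ + ‖X ^ 2 + Y ^ 2‖ := norm_add_le _ _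
    _ = 2 * ‖opAbs B ^ 4 + opAbs (adjoint B) ^ 4‖ := by rw [e4]; ring

lemma key2 (B : H →L[ℂ] H) :
    numRadius (B ^ 2) ≤ ‖opAbs B ^ 2 + opAbs (adjoint B) ^ 2‖ / 2 := by
  refine numRadius_le _ (by positivity) fun x hx => ?_
  have he : (⟪(B ^ 2) x, x⟫_ℂ) = ⟪B x, adjoint B x⟫_ℂ := by
    rw [pow_two, mul_apply_eq_comp]
    exact (adjoint_inner_right B (B x) x).symm
  have hcs : ‖(⟪B x, adjoint B x⟫_ℂ)‖ ≤ ‖B x‖ * ‖adjoint B x‖ := norm_inner_le_norm _ _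
  have hn := normsq_add_le B hx
  rw [he]
  nlinarith [sq_nonneg (‖B x‖ - ‖adjoint B x‖)]

lemma key1 (B : H →L[ℂ] H) {x : H} (hx : ‖x‖ = 1) :
    ‖(⟪B x, x⟫_ℂ)‖ ^ 2
      ≤ ‖opAbs B ^ 2 + opAbs (adjoint B) ^ 2‖ / 4 + numRadius (B ^ 2) / 2 := by
  have hb := my_buzano (B x) (adjoint B x) x hx
  have hflip : (⟪x, adjoint B x⟫_ℂ) = ⟪B x, x⟫_ℂ := adjoint_inner_right B x x
  have hsq : ‖(⟪B x, x⟫_ℂ) * ⟪x, adjoint B x⟫_ℂ‖ = ‖(⟪B x, x⟫_ℂ)‖ ^ 2 := by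
    rw [hflip, norm_mul, sq]
  rw [hsq] at hb
  have he : (⟪B x, adjoint B x⟫_ℂ) = ⟪(B ^ 2) x, x⟫_ℂ := by
    rw [pow_two, mul_apply_eq_comp]
    exact adjoint_inner_right B (B x) x
  rw [he] at hb
  have hv : ‖(⟪(B ^ 2) x, x⟫_ℂ)‖ ≤ numRadius (B ^ 2) := le_numRadius _ hx
  have hn := normsq_add_le B hx
  nlinarith [sq_nonneg (‖B x‖ - ‖adjoint B x‖)]

theorem stmt_13 (B : H →L[ℂ] H) (α : ℝ) (hα0 : 0 ≤ α) (hα1 : α ≤ 1) :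
    numRadius B ^ 4 ≤
      ((1 + α) / 8) * ‖opAbs B ^ 4 + opAbs (adjoint B) ^ 4‖ +
        ((1 - α) / 4) * numRadius (B ^ 2) ^ 2 +
        (1 / 4) * ‖opAbs B ^ 2 + opAbs (adjoint B) ^ 2‖ * numRadius (B ^ 2) := by
  set w := numRadius B with hw
  set v := numRadius (B ^ 2) with hvdef
  set T := ‖opAbs B ^ 2 + opAbs (adjoint B) ^ 2‖ with hT
  set S := ‖opAbs B ^ 4 + opAbs (adjoint B) ^ 4‖ with hS
  have hv0 : 0 ≤ v := numRadius_nonneg_s13 _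
  have hw0 : 0 ≤ w := numRadius_nonneg_s13 _
  have hT0 : 0 ≤ T := norm_nonneg _
  have hS0 : 0 ≤ S := norm_nonneg _
  have hK0 : 0 ≤ T / 4 + v / 2 := by positivity
  have hw2 : w ^ 2 ≤ T / 4 + v / 2 := by
    have hle : w ≤ √(T / 4 + v / 2) := by
      refine numRadius_le B (Real.sqrt_nonneg _) fun x hx => ?_
      have h1 := key1 B hx
      exact (Real.le_sqrt (norm_nonneg _) hK0).mpr h1
    calc w ^ 2 ≤ (√(T / 4 + v / 2)) ^ 2 := pow_le_pow_left₀ hw0 hle 2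
      _ = T / 4 + v / 2 := Real.sq_sqrt hK0
  have hv2 : v ≤ T / 2 := key2 B
  have hTS : T ^ 2 ≤ 2 * S := Tsq_le B
  have h1 : w ^ 4 ≤ (T / 4 + v / 2) ^ 2 := by
    calc w ^ 4 = (w ^ 2) ^ 2 := by ring
      _ ≤ (T / 4 + v / 2) ^ 2 := pow_le_pow_left₀ (sq_nonneg w) hw2 2
  have h2 : v ^ 2 ≤ S / 2 := by nlinarith
  have hα' : 0 ≤ α * (S - 2 * v ^ 2) := mul_nonneg hα0 (by linarith)
  nlinarith [h1, hα', hTS, hv0, hT0, mul_nonneg hT0 hv0]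
end
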